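/- arXiv:1706.06707 — 2 statements merged into one kernel-verified Lean document; each statement's English description precedes it below -/
import Mathlib

section
/- Let d ≥ 1, let p be a prime with p ∤ d, and let f denote the multiplicative order of p in (ℤ/d)×. Then for a ∈ 𝔄_d, one has a ∈ 𝔅_d(p) if and only if for every t ∈ (ℤ/d)×, the orbit of t·a under the cyclic subgroup ⟨p⟩ ⊆ (ℤ/d)× contains exactly as many elements of age 1 as elements of age 3. Consequently, for any subgroup H ⊆ (ℤ/d)⁴, the set 𝔈_d(p) ∩ H is the union of those (ℤ/d)×-orbits in 𝔄_d ∩ H that contain at least one ⟨p⟩-orbit having unequal numbers of elements of age 1 and of age 3. -/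
/-- `M_d`: quadruples in `(ℤ/d)⁴` whose coordinates sum to zero, with all coordinates
nonzero (here: the subset `𝔄_d ⊆ M_d`). -/
def frakA (d : ℕ) : Set (Fin 4 → ZMod d) :=
  {a | (∑ i, a i = 0) ∧ ∀ i, a i ≠ 0}

/-- The age `S(a) = Σᵢ ⟨âᵢ/d⟩`, where `âᵢ ∈ ℤ` is any lift of `aᵢ` (we use the canonical
lift `(a i).val`; the fractional part is independent of the choice of lift). -/
noncomputable def age {d : ℕ} (a : Fin 4 → ZMod d) : ℚ :=
  ∑ i, Int.fract (((a i).val : ℚ) / d)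

/-- `𝔅_d(0)`: elements of `𝔄_d` all of whose `(ℤ/d)ˣ`-multiples have age 2. -/
noncomputable def frakB0 (d : ℕ) : Set (Fin 4 → ZMod d) :=
  {a ∈ frakA d | ∀ t : (ZMod d)ˣ, age (fun i => (t : ZMod d) * a i) = 2}

/-- `𝔈_d(0) = 𝔄_d \ 𝔅_d(0)` (denoted `𝔍_d(0)` in the paper). -/
noncomputable def frakE0 (d : ℕ) : Set (Fin 4 → ZMod d) :=
  frakA d \ frakB0 d

/-- `𝔅_d(p)` for a prime `p ∤ d`, where `f = orderOf (p : ZMod d)` is the multiplicative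
order of `p` mod `d`: elements `a ∈ 𝔄_d` with `Σ_{j<f} S(t·pʲ·a) = 2f` for all
`t ∈ (ℤ/d)ˣ`. -/
noncomputable def frakBp (d p : ℕ) : Set (Fin 4 → ZMod d) :=
  {a ∈ frakA d | ∀ t : (ZMod d)ˣ,
    ∑ j ∈ Finset.range (orderOf (p : ZMod d)),
      age (fun i => (t : ZMod d) * (p : ZMod d) ^ j * a i) =
        2 * (orderOf (p : ZMod d) : ℚ)}

/-- `𝔈_d(p) = 𝔄_d \ 𝔅_d(p)` (denoted `𝔍_d(p)` in the paper). -/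
noncomputable def frakEp (d p : ℕ) : Set (Fin 4 → ZMod d) :=
  frakA d \ frakBp d p

/-- The orbit of `b ∈ (ℤ/d)⁴` under the cyclic subgroup `⟨p⟩ ⊆ (ℤ/d)ˣ`. -/
def pOrbit (d p : ℕ) (b : Fin 4 → ZMod d) : Set (Fin 4 → ZMod d) :=
  {x | ∃ j : ℕ, x = fun i => (p : ZMod d) ^ j * b i}

lemma frakA_two_le {d : ℕ} (hd : 1 ≤ d) {a : Fin 4 → ZMod d} (ha : a ∈ frakA d) : 2 ≤ d := by
  rcases Nat.lt_or_ge d 2 with h | h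
  · interval_cases d
    exact absurd (Subsingleton.elim (a 0) 0) (ha.2 0)
  · exact h

lemma unit_mul_mem {d : ℕ} {c : ZMod d} (hc : IsUnit c) {a : Fin 4 → ZMod d}
    (ha : a ∈ frakA d) : (fun i => c * a i) ∈ frakA d := by
  refine ⟨by rw [← Finset.mul_sum, ha.1, mul_zero], fun i h => ha.2 i ?_⟩
  exact (hc.mul_right_eq_zero).mp h

lemma age_cases {d : ℕ} (hd : 2 ≤ d) {a : Fin 4 → ZMod d} (ha : a ∈ frakA d) :
    ∃ k : ℕ, age a = k ∧ (k = 1 ∨ k = 2 ∨ k = 3) := by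
  haveI : NeZero d := ⟨by omega⟩
  have hv : ∀ i, 1 ≤ (a i).val ∧ (a i).val < d := fun i =>
    ⟨Nat.one_le_iff_ne_zero.mpr (fun h => ha.2 i ((ZMod.val_eq_zero _).mp h)), ZMod.val_lt _⟩
  have hage : age a = ((∑ i, (a i).val : ℕ) : ℚ) / d := by
    unfold age
    push_cast
    rw [Finset.sum_div]
    refine Finset.sum_congr rfl fun i _ => ?_
    refine Int.fract_eq_self.mpr ⟨by positivity, ?_⟩
    rw [div_lt_one (by positivity)]
    exact_mod_cast (hv i).2
  have hdvd : d ∣ ∑ i, (a i).val := by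
    rw [← ZMod.natCast_eq_zero_iff]
    push_cast [ZMod.natCast_zmod_val]
    exact ha.1
  obtain ⟨k, hk⟩ := hdvd
  have h4 : 4 ≤ ∑ i, (a i).val := by
    calc (4:ℕ) = ∑ _i : Fin 4, 1 := by simp
    _ ≤ ∑ i, (a i).val := Finset.sum_le_sum fun i _ => (hv i).1
  have hlt : ∑ i, (a i).val < 4 * d := by
    calc ∑ i, (a i).val < ∑ _i : Fin 4, d :=
      Finset.sum_lt_sum_of_nonempty (by simp) fun i _ => (hv i).2
    _ = 4 * d := by simp [Finset.sum_const, mul_comm]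
  have hk1 : 1 ≤ k := by nlinarith
  have hk4 : k < 4 := by nlinarith
  refine ⟨k, ?_, by omega⟩
  rw [hage, hk]
  push_cast
  field_simp

lemma core (d : ℕ) (hd : 1 ≤ d) (p : ℕ) (hp : p.Prime) (hpd : ¬ p ∣ d)
    (b : Fin 4 → ZMod d) (hb : b ∈ frakA d) :
    (∑ j ∈ Finset.range (orderOf (p : ZMod d)), age (fun i => (p : ZMod d) ^ j * b i)
        = 2 * (orderOf (p : ZMod d) : ℚ)) ↔
      {x ∈ pOrbit d p b | age x = 1}.ncard = {x ∈ pOrbit d p b | age x = 3}.ncard := by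
  classical
  have hd2 : 2 ≤ d := frakA_two_le hd hb
  haveI : NeZero d := ⟨by omega⟩
  have hcop : Nat.Coprime p d := (Nat.Prime.coprime_iff_not_dvd hp).mpr hpd
  set u : (ZMod d)ˣ := ZMod.unitOfCoprime p hcop with hu
  have hup : (u : ZMod d) = p := ZMod.coe_unitOfCoprime p hcop
  have hpu : IsUnit (p : ZMod d) := hup ▸ u.isUnit
  set f := orderOf (p : ZMod d) with hf
  have hf0 : 0 < f := by
    rw [hf, ← hup, orderOf_units]
    exact orderOf_pos u
  have hpf : (p : ZMod d) ^ f = 1 := pow_orderOf_eq_one _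
  set vec : ℕ → (Fin 4 → ZMod d) := fun j => fun i => (p : ZMod d) ^ j * b i with hvec
  have hvecmem : ∀ j, vec j ∈ frakA d := fun j => unit_mul_mem (hpu.pow j) hb
  have hvecadd : ∀ j k, vec (j + k) = fun i => (p:ZMod d)^j * vec k i := by
    intro j k; funext i; simp [hvec, pow_add, mul_assoc]
  have hvecf : vec f = b := by funext i; simp [hvec, hpf]
  have hex : ∃ n, 0 < n ∧ vec n = b := ⟨f, hf0, hvecf⟩
  set m := Nat.find hex with hm
  obtain ⟨hm0, hvm⟩ : 0 < m ∧ vec m = b := Nat.find_spec hex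
  have hmin : ∀ k, 0 < k → vec k = b → m ≤ k := fun k h1 h2 => Nat.find_le ⟨h1, h2⟩
  have hper : ∀ j, vec (j + m) = vec j := by
    intro j; rw [hvecadd j m, hvm]
  have hrep : ∀ r j, vec (j + r * m) = vec j := by
    intro r
    induction r with
    | zero => simp
    | succ n ih =>
      intro j
      have h : j + (n+1)*m = (j + n*m) + m := by ring
      rw [h, hper, ih]
  have hmdvdf : m ∣ f := by
    have h1 : vec (f % m) = b := by
      have h2 := hrep (f / m) (f % m)
      rw [Nat.mod_add_div'] at h2
      rw [← h2, hvecf]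
    rcases Nat.eq_zero_or_pos (f % m) with h | h
    · exact Nat.dvd_of_mod_eq_zero h
    · have := hmin _ h h1
      have := Nat.mod_lt f hm0
      omega
  set q := f / m with hq
  have hfq : m * q = f := Nat.mul_div_cancel' hmdvdf
  have hq0 : 0 < q := Nat.div_pos (Nat.le_of_dvd hf0 hmdvdf) hm0
  -- injectivity on range m
  have hkey : ∀ j k, k < m → j ≤ k → vec j = vec k → j = k := by
    intro j k hk hjk heq
    by_contra hne
    have hlt : j < k := lt_of_le_of_ne hjk hne
    have hvb : vec (k - j) = b := by
      funext i
      have h1 : (p:ZMod d)^j * ((p:ZMod d)^(k-j) * b i) = (p:ZMod d)^j * b i := by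
        rw [← mul_assoc, ← pow_add, show j + (k - j) = k by omega]
        exact (congrFun heq i).symm
      exact (hpu.pow j).mul_left_cancel h1
    have := hmin _ (by omega) hvb
    omega
  have hinj : Set.InjOn vec (Finset.range m) := by
    intro x hx y hy hxy
    simp only [Finset.coe_range, Set.mem_Iio] at hx hy
    rcases le_total x y with h | h
    · exact hkey x y hy h hxy
    · exact (hkey y x hx h hxy.symm).symm
  set O : Finset (Fin 4 → ZMod d) := (Finset.range m).image vec with hO
  have horb : pOrbit d p b = ↑O := by
    ext x
    simp only [pOrbit, Set.mem_setOf_eq, hO, Finset.coe_image, Set.mem_image,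
      Finset.coe_range, Set.mem_Iio]
    constructor
    · rintro ⟨j, rfl⟩
      refine ⟨j % m, Nat.mod_lt _ hm0, ?_⟩
      have h2 := hrep (j / m) (j % m)
      rw [Nat.mod_add_div'] at h2
      exact h2.symm
    · rintro ⟨j, _, rfl⟩
      exact ⟨j, rfl⟩
  have hcard : ∀ r : ℚ, {x ∈ pOrbit d p b | age x = r}.ncard
      = (O.filter (fun x => age x = r)).card := by
    intro r
    have : {x ∈ pOrbit d p b | age x = r} = ↑(O.filter (fun x => age x = r)) := by
      rw [horb]; ext x
      simp [Finset.mem_filter]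
    rw [this, Set.ncard_coe_finset]
  set n1 := (O.filter (fun x => age x = 1)).card with hn1
  set n2 := (O.filter (fun x => age x = 2)).card with hn2
  set n3 := (O.filter (fun x => age x = 3)).card with hn3
  have hmemO : ∀ x ∈ O, age x = 1 ∨ age x = 2 ∨ age x = 3 := by
    intro x hx
    rw [hO, Finset.mem_image] at hx
    obtain ⟨j, _, rfl⟩ := hx
    obtain ⟨k, hk, hk'⟩ := age_cases hd2 (hvecmem j)
    rcases hk' with h | h | h <;> subst h <;> simp [hk]
  have hcardO : O.card = m := by
    rw [hO, Finset.card_image_of_injOn hinj, Finset.card_range]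
  -- partition of O
  have hfilter3 : O.filter (fun x => ¬ age x = 1 ∧ ¬ age x = 2) = O.filter (fun x => age x = 3) := by
    apply Finset.filter_congr
    intro x hx
    rcases hmemO x hx with h | h | h <;> simp [h]
  have hfilter2 : O.filter (fun x => ¬ age x = 1 ∧ age x = 2) = O.filter (fun x => age x = 2) := by
    apply Finset.filter_congr
    intro x hx
    rcases hmemO x hx with h | h | h <;> simp [h]
  have hsplit : ∀ (g : (Fin 4 → ZMod d) → ℚ), ∑ x ∈ O, g x =
      ∑ x ∈ O.filter (fun x => age x = 1), g x + ∑ x ∈ O.filter (fun x => age x = 2), g x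
        + ∑ x ∈ O.filter (fun x => age x = 3), g x := by
    intro g
    rw [← Finset.sum_filter_add_sum_filter_not O (fun x => age x = 1) g,
      ← Finset.sum_filter_add_sum_filter_not (O.filter (fun x => ¬ age x = 1)) (fun x => age x = 2) g,
      Finset.filter_filter, Finset.filter_filter, hfilter3, hfilter2, add_assoc]
  have hpart : m = n1 + n2 + n3 := by
    have h1 := hsplit (fun _ => (1:ℚ))
    simp only [Finset.sum_const, nsmul_eq_mul, mul_one] at h1
    rw [← hcardO]
    have : ((O.card : ℚ)) = ((n1 + n2 + n3 : ℕ) : ℚ) := by push_cast; linarith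
    exact_mod_cast this
  have hsumO : ∑ x ∈ O, age x = (n1 : ℚ) + 2 * n2 + 3 * n3 := by
    rw [hsplit age]
    have e1 : ∑ x ∈ O.filter (fun x => age x = 1), age x = (n1 : ℚ) := by
      rw [Finset.sum_congr rfl (fun x hx => (Finset.mem_filter.mp hx).2)]
      simp [hn1]
    have e2 : ∑ x ∈ O.filter (fun x => age x = 2), age x = 2 * (n2 : ℚ) := by
      rw [Finset.sum_congr rfl (fun x hx => (Finset.mem_filter.mp hx).2)]
      simp [hn2, mul_comm]
    have e3 : ∑ x ∈ O.filter (fun x => age x = 3), age x = 3 * (n3 : ℚ) := by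
      rw [Finset.sum_congr rfl (fun x hx => (Finset.mem_filter.mp hx).2)]
      simp [hn3, mul_comm]
    rw [e1, e2, e3]
  have hTm : ∑ j ∈ Finset.range m, age (vec j) = ∑ x ∈ O, age x := by
    rw [hO, Finset.sum_image (fun x hx y hy h => hinj hx hy h)]
  have hsumr : ∀ r : ℕ, ∑ j ∈ Finset.range (m * r), age (vec j)
      = (r : ℚ) * ∑ x ∈ O, age x := by
    intro r
    induction r with
    | zero => simp
    | succ n ih =>
      rw [Nat.mul_succ, Finset.sum_range_add, ih]
      have h2 : ∑ j ∈ Finset.range m, age (vec (m * n + j)) = ∑ x ∈ O, age x := by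
        rw [← hTm]
        refine Finset.sum_congr rfl fun j _ => ?_
        rw [show m * n + j = j + n * m by ring, hrep]
      rw [h2]
      push_cast
      ring
  have hLHS : ∑ j ∈ Finset.range f, age (fun i => (p : ZMod d) ^ j * b i)
      = (q : ℚ) * ((n1 : ℚ) + 2 * n2 + 3 * n3) := by
    have : ∑ j ∈ Finset.range f, age (fun i => (p : ZMod d) ^ j * b i)
        = ∑ j ∈ Finset.range (m * q), age (vec j) := by rw [hfq]
    rw [this, hsumr, hsumO]
  rw [hLHS, hcard 1, hcard 3, ← hn1, ← hn3]
  have hfcast : (f : ℚ) = (m : ℚ) * q := by exact_mod_cast hfq.symm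
  have hmcast : (m : ℚ) = (n1 : ℚ) + n2 + n3 := by exact_mod_cast hpart
  rw [hfcast, hmcast]
  have hqne : (q : ℚ) ≠ 0 := by positivity
  constructor
  · intro h
    have h' : (n1:ℚ) + 2*n2 + 3*n3 = 2*((n1:ℚ) + n2 + n3) :=
      mul_left_cancel₀ hqne (h.trans (by ring))
    have : (n1 : ℚ) = n3 := by linarith
    exact_mod_cast this
  · intro h
    have : (n1 : ℚ) = (n3 : ℚ) := by exact_mod_cast h
    rw [this]
    ring

/-- For a prime `p ∤ d`: `a ∈ 𝔅_d(p)` iff for every `t ∈ (ℤ/d)ˣ` the `⟨p⟩`-orbit of `t·a`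
contains as many elements of age 1 as of age 3.  Consequently, for a subgroup
`H ⊆ (ℤ/d)⁴`, the set `𝔈_d(p) ∩ H` is the union of those `(ℤ/d)ˣ`-orbits in `𝔄_d ∩ H`
containing at least one `⟨p⟩`-orbit with unequal numbers of elements of age 1 and age 3. -/
theorem frakBp_iff_orbit_balanced (d : ℕ) (hd : 1 ≤ d) (p : ℕ) (hp : p.Prime)
    (hpd : ¬ p ∣ d) :
    (∀ a ∈ frakA d, a ∈ frakBp d p ↔
      ∀ t : (ZMod d)ˣ,
        {x ∈ pOrbit d p (fun i => (t : ZMod d) * a i) | age x = 1}.ncard =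
          {x ∈ pOrbit d p (fun i => (t : ZMod d) * a i) | age x = 3}.ncard) ∧
    ∀ H : AddSubgroup (Fin 4 → ZMod d),
      frakEp d p ∩ H = {a | a ∈ frakA d ∧ a ∈ H ∧
        ∃ t : (ZMod d)ˣ,
          {x ∈ pOrbit d p (fun i => (t : ZMod d) * a i) | age x = 1}.ncard ≠
            {x ∈ pOrbit d p (fun i => (t : ZMod d) * a i) | age x = 3}.ncard} := by
  have hfirst : ∀ a ∈ frakA d, a ∈ frakBp d p ↔
      ∀ t : (ZMod d)ˣ,
        {x ∈ pOrbit d p (fun i => (t : ZMod d) * a i) | age x = 1}.ncard =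
          {x ∈ pOrbit d p (fun i => (t : ZMod d) * a i) | age x = 3}.ncard := by
    intro a ha
    have hmem : a ∈ frakBp d p ↔ ∀ t : (ZMod d)ˣ,
        ∑ j ∈ Finset.range (orderOf (p : ZMod d)),
          age (fun i => (t : ZMod d) * (p : ZMod d) ^ j * a i) =
            2 * (orderOf (p : ZMod d) : ℚ) := by
      simp only [frakBp, Set.mem_setOf_eq, ha, true_and]
    rw [hmem]
    refine forall_congr' fun t => ?_
    have hb : (fun i => (t : ZMod d) * a i) ∈ frakA d := unit_mul_mem t.isUnit ha
    have h2 : ∑ j ∈ Finset.range (orderOf (p : ZMod d)),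
        age (fun i => (t : ZMod d) * (p : ZMod d) ^ j * a i)
        = ∑ j ∈ Finset.range (orderOf (p : ZMod d)),
          age (fun i => (p : ZMod d) ^ j * ((t : ZMod d) * a i)) :=
      Finset.sum_congr rfl fun j _ => by congr 1; funext i; ring
    rw [h2]
    exact core d hd p hp hpd (fun i => (t : ZMod d) * a i) hb
  refine ⟨hfirst, fun H => ?_⟩
  ext x
  simp only [frakEp, Set.mem_inter_iff, Set.mem_diff, SetLike.mem_coe, Set.mem_setOf_eq]
  constructor
  · rintro ⟨⟨hxA, hxB⟩, hxH⟩
    refine ⟨hxA, hxH, ?_⟩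
    by_contra hc
    push_neg at hc
    exact hxB ((hfirst x hxA).mpr hc)
  · rintro ⟨hxA, hxH, t, ht⟩
    exact ⟨⟨hxA, fun hB => ht ((hfirst x hxA).mp hB t)⟩, hxH⟩
end

section
/- Let d ≥ 1, let p be a prime with p ∤ d, and let H ⊆ (ℤ/d)⁴ be a subgroup. Suppose that 𝔄_d ∩ H contains exactly one element a₀ of age 1, and let h denote the order of a₀ in (ℤ/d)⁴. Then: (1) if p^ℓ ≡ −1 (mod h) for some positive integer ℓ, then 𝔈_d(p) ∩ H = ∅; (2) if p^ℓ ≢ −1 (mod h) for all positive integers ℓ, then 𝔈_d(p) ∩ H = 𝔈_d(0) ∩ H. -/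
section Aux
variable {d : ℕ} [NeZero d]

lemma age_eq_sum {a : Fin 4 → ZMod d} (ha : a ∈ frakA d) :
    age a = (∑ i, ((a i).val : ℚ)) / d := by
  have hd0 : 0 < (d:ℚ) := by exact_mod_cast Nat.pos_of_ne_zero (NeZero.ne d)
  unfold age
  rw [Finset.sum_div]
  refine Finset.sum_congr rfl fun i _ => ?_
  rw [Int.fract_eq_self.mpr ⟨by positivity, by
    rw [div_lt_one hd0]; exact_mod_cast (a i).val_lt⟩]

lemma exists_age_nat {a : Fin 4 → ZMod d} (ha : a ∈ frakA d) :
    ∃ k : ℕ, age a = k ∧ 1 ≤ k ∧ k ≤ 3 := by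
  have hd0 : 0 < d := Nat.pos_of_ne_zero (NeZero.ne d)
  have hcast : ∀ i, (((a i).val : ℕ) : ZMod d) = a i := fun i => ZMod.natCast_rightInverse _
  set s : ℕ := ∑ i, (a i).val with hs
  have hdvd : d ∣ s := by
    have h1 : ((s : ℕ) : ZMod d) = 0 := by
      rw [hs, Nat.cast_sum]
      rw [Finset.sum_congr rfl fun i _ => hcast i]
      exact ha.1
    exact (ZMod.natCast_eq_zero_iff s d).mp h1
  have hlb : 4 ≤ s := by
    have : ∀ i ∈ Finset.univ, 1 ≤ (a i).val := fun i _ =>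
      Nat.one_le_iff_ne_zero.mpr (fun h => (ha.2 i) ((ZMod.val_eq_zero _).mp h))
    calc (4:ℕ) = Finset.univ.card • 1 := by simp
    _ ≤ s := Finset.card_nsmul_le_sum _ _ _ this
  have hub : s ≤ 4 * d - 4 := by
    have : ∀ i ∈ Finset.univ, (a i).val ≤ d - 1 := fun i _ =>
      Nat.le_sub_one_of_lt (ZMod.val_lt _)
    calc s ≤ Finset.univ.card • (d - 1) := Finset.sum_le_card_nsmul _ _ _ this
    _ = 4 * (d-1) := by simp [mul_comm]
    _ ≤ 4 * d - 4 := by omega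
  obtain ⟨k, hk⟩ := hdvd
  have hk1 : 1 ≤ k := by
    rcases Nat.eq_zero_or_pos k with rfl | h
    · omega
    · exact h
  have hk3 : k ≤ 3 := by
    by_contra hgt
    push_neg at hgt
    have h4 : d * 4 ≤ d * k := Nat.mul_le_mul_left d hgt
    have := hk ▸ hub
    omega
  refine ⟨k, ?_, hk1, hk3⟩
  rw [age_eq_sum ha]
  have : (∑ i, ((a i).val : ℚ)) = (s : ℚ) := by rw [hs]; push_cast; ring
  rw [this, hk]
  have hd0' : (d:ℚ) ≠ 0 := by exact_mod_cast hd0.ne'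
  push_cast
  field_simp

lemma frakA_neg {a : Fin 4 → ZMod d} (ha : a ∈ frakA d) : -a ∈ frakA d := by
  refine ⟨?_, fun i => neg_ne_zero.mpr (ha.2 i)⟩
  simp only [Pi.neg_apply, Finset.sum_neg_distrib, ha.1, neg_zero]

lemma age_neg {a : Fin 4 → ZMod d} (ha : a ∈ frakA d) : age (-a) = 4 - age a := by
  have hd0 : 0 < d := Nat.pos_of_ne_zero (NeZero.ne d)
  have hd0' : (d:ℚ) ≠ 0 := by exact_mod_cast hd0.ne'
  rw [age_eq_sum (frakA_neg ha), age_eq_sum ha]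
  have h1 : ∀ i, (((-a) i).val : ℚ) = d - ((a i).val : ℚ) := by
    intro i
    have : NeZero (a i) := ⟨ha.2 i⟩
    show (((-(a i)).val : ℕ) : ℚ) = _
    rw [ZMod.val_neg_of_ne_zero]
    have := (ZMod.val_lt (a i)).le
    push_cast [Nat.cast_sub this]
    ring
  rw [Finset.sum_congr rfl fun i _ => h1 i]
  rw [Finset.sum_sub_distrib]
  simp
  field_simp


lemma frakA_unit_smul {t : (ZMod d)ˣ} {a : Fin 4 → ZMod d} (ha : a ∈ frakA d) :
    (fun i => (t : ZMod d) * a i) ∈ frakA d := by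
  refine ⟨by rw [← Finset.mul_sum, ha.1, mul_zero], fun i hz => ha.2 i ?_⟩
  have := congrArg (fun x => ((t⁻¹ : (ZMod d)ˣ) : ZMod d) * x) hz
  simpa [← mul_assoc] using this

lemma mem_H_smul (H : AddSubgroup (Fin 4 → ZMod d)) (c : ZMod d) {a : Fin 4 → ZMod d}
    (haH : a ∈ H) : (fun i => c * a i) ∈ H := by
  have heq : (fun i => c * a i) = c.val • a := by
    funext i
    rw [Pi.smul_apply, ← Nat.cast_smul_eq_nsmul (ZMod d), smul_eq_mul,
      ZMod.natCast_rightInverse c]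
  rw [heq]
  exact AddSubgroup.nsmul_mem H haH _

lemma smul_a₀_eq_zero_iff (a₀ : Fin 4 → ZMod d) (c : ZMod d) :
    (fun i => c * a₀ i) = 0 ↔ addOrderOf a₀ ∣ c.val := by
  have heq : (fun i => c * a₀ i) = c.val • a₀ := by
    funext i
    rw [Pi.smul_apply, ← Nat.cast_smul_eq_nsmul (ZMod d), smul_eq_mul,
      ZMod.natCast_rightInverse c]
  rw [heq]
  exact addOrderOf_dvd_iff_nsmul_eq_zero.symm

lemma castHom_eq_zero_iff {h : ℕ} [NeZero h] (hdvd : h ∣ d) (c : ZMod d) :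
    ZMod.castHom hdvd (ZMod h) c = 0 ↔ h ∣ c.val := by
  rw [ZMod.castHom_apply, ← ZMod.natCast_val, ZMod.natCast_eq_zero_iff]

lemma smul_eq_a₀_iff (a₀ : Fin 4 → ZMod d) [NeZero (addOrderOf a₀)]
    (hdvd : addOrderOf a₀ ∣ d) (c : ZMod d) :
    (fun i => c * a₀ i) = a₀ ↔ ZMod.castHom hdvd (ZMod (addOrderOf a₀)) c = 1 := by
  have h1 : ((fun i => c * a₀ i) = a₀) ↔ ((fun i => (c - 1) * a₀ i) = (0 : Fin 4 → ZMod d)) := by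
    constructor
    · intro hyp; funext i
      have h2 := congrFun hyp i
      simp only [Pi.zero_apply, sub_mul, one_mul]
      rw [h2, sub_self]
    · intro hyp; funext i
      have h2 := congrFun hyp i
      simp only [Pi.zero_apply, sub_mul, one_mul] at h2
      exact sub_eq_zero.mp h2
  rw [h1, smul_a₀_eq_zero_iff, ← castHom_eq_zero_iff hdvd, map_sub, map_one, sub_eq_zero]

lemma smul_eq_neg_a₀_iff (a₀ : Fin 4 → ZMod d) [NeZero (addOrderOf a₀)]
    (hdvd : addOrderOf a₀ ∣ d) (c : ZMod d) :
    (fun i => c * a₀ i) = -a₀ ↔ ZMod.castHom hdvd (ZMod (addOrderOf a₀)) c = -1 := by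
  have h1 : ((fun i => c * a₀ i) = -a₀) ↔ ((fun i => (c + 1) * a₀ i) = (0 : Fin 4 → ZMod d)) := by
    constructor
    · intro hyp; funext i
      have h2 := congrFun hyp i
      simp only [Pi.neg_apply] at h2
      simp only [Pi.zero_apply, add_mul, one_mul, h2, neg_add_cancel]
    · intro hyp; funext i
      have h2 := congrFun hyp i
      simp only [Pi.zero_apply, add_mul, one_mul] at h2
      simp only [Pi.neg_apply]
      exact eq_neg_of_add_eq_zero_left h2
  rw [h1, smul_a₀_eq_zero_iff, ← castHom_eq_zero_iff hdvd, map_add, map_one]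
  constructor
  · intro hx; exact eq_neg_of_add_eq_zero_left hx
  · intro hx; rw [hx]; ring

lemma age_eq_two_add (H : AddSubgroup (Fin 4 → ZMod d)) {a₀ : Fin 4 → ZMod d}
    (ha₀A : a₀ ∈ frakA d) (hage : age a₀ = 1)
    (huniq : ∀ b, b ∈ frakA d → b ∈ H → age b = 1 → b = a₀)
    (hne : a₀ ≠ -a₀)
    {b : Fin 4 → ZMod d} (hbA : b ∈ frakA d) (hbH : b ∈ H) :
    age b = 2 + ((if b = -a₀ then (1:ℚ) else 0) - (if b = a₀ then (1:ℚ) else 0)) := by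
  have hage3 : age (-a₀) = 3 := by rw [age_neg ha₀A, hage]; norm_num
  obtain ⟨k, hk, hk1, hk3⟩ := exists_age_nat hbA
  interval_cases k
  · have hb : b = a₀ := huniq b hbA hbH (by rw [hk]; norm_num)
    have hb' : b ≠ -a₀ := by rw [hb]; exact hne
    rw [hk, if_neg hb', if_pos hb]; norm_num
  · have hb : b ≠ a₀ := by intro h; rw [h, hage] at hk; norm_num at hk
    have hb' : b ≠ -a₀ := by intro h; rw [h, hage3] at hk; norm_num at hk
    rw [hk, if_neg hb', if_neg hb]; norm_num
  · have hnb : -b = a₀ := huniq (-b) (frakA_neg hbA) (neg_mem hbH)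
      (by rw [age_neg hbA, hk]; norm_num)
    have hb : b = -a₀ := by rw [← hnb, neg_neg]
    have hb2 : b ≠ a₀ := by rw [hb]; exact fun hcon => hne hcon.symm
    rw [hk, if_pos hb, if_neg hb2]; norm_num

lemma sum_ite_shift {m : ℕ} (c q : ZMod m) (f ℓ : ℕ) (hf : 0 < f)
    (hq : q ^ f = 1) (hℓ : ℓ < f) (hql : q ^ ℓ = -1) :
    (∑ j ∈ Finset.range f, if c * q ^ j = -1 then (1:ℚ) else 0)
      = ∑ j ∈ Finset.range f, if c * q ^ j = 1 then (1:ℚ) else 0 := by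
  refine Finset.sum_nbij' (fun j => (j + ℓ) % f) (fun j => (j + (f - ℓ)) % f)
    (fun a _ => Finset.mem_range.mpr (Nat.mod_lt _ hf))
    (fun a _ => Finset.mem_range.mpr (Nat.mod_lt _ hf)) ?_ ?_ ?_
  · intro a ha
    rw [Finset.mem_range] at ha
    show ((a + ℓ) % f + (f - ℓ)) % f = a
    rw [Nat.mod_add_mod]
    have h1 : a + ℓ + (f - ℓ) = a + f := by omega
    rw [h1, Nat.add_mod_right, Nat.mod_eq_of_lt ha]
  · intro a ha
    rw [Finset.mem_range] at ha
    show ((a + (f - ℓ)) % f + ℓ) % f = a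
    rw [Nat.mod_add_mod]
    have h1 : a + (f - ℓ) + ℓ = a + f := by omega
    rw [h1, Nat.add_mod_right, Nat.mod_eq_of_lt ha]
  · intro a _
    show (if c * q ^ a = -1 then (1:ℚ) else 0) = (if c * q ^ ((a + ℓ) % f) = 1 then (1:ℚ) else 0)
    have h2 : c * q ^ ((a + ℓ) % f) = -(c * q ^ a) := by
      rw [← pow_eq_pow_mod _ hq, pow_add, hql]
      ring
    rw [h2]
    have h3 : (-(c * q ^ a) = 1) ↔ (c * q ^ a = -1) := neg_eq_iff_eq_neg
    rw [if_congr h3 rfl rfl]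

end Aux

/-- Suppose `𝔄_d ∩ H` contains exactly one element `a₀` of age 1, of additive order `h`, and
`p` is a prime not dividing `d`.  If `pˡ ≡ −1 (mod h)` for some `ℓ ≥ 1` then
`𝔈_d(p) ∩ H = ∅`; otherwise `𝔈_d(p) ∩ H = 𝔈_d(0) ∩ H`. -/
theorem frakEp_inter_empty_or_eq (d : ℕ) (hd : 1 ≤ d) (p : ℕ) (hp : p.Prime)
    (hpd : ¬ p ∣ d) (H : AddSubgroup (Fin 4 → ZMod d))
    (a₀ : Fin 4 → ZMod d) (ha₀A : a₀ ∈ frakA d) (ha₀H : a₀ ∈ H) (hage : age a₀ = 1)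
    (huniq : ∀ b, b ∈ frakA d → b ∈ H → age b = 1 → b = a₀) :
    ((∃ ℓ : ℕ, 0 < ℓ ∧ (p : ZMod (addOrderOf a₀)) ^ ℓ = -1) →
        frakEp d p ∩ H = ∅) ∧
    ((∀ ℓ : ℕ, 0 < ℓ → (p : ZMod (addOrderOf a₀)) ^ ℓ ≠ -1) →
        frakEp d p ∩ H = frakE0 d ∩ H) := by
  haveI : NeZero d := ⟨by omega⟩
  have hne : a₀ ≠ -a₀ := by
    intro hcon
    have h3 : age (-a₀) = 3 := by rw [age_neg ha₀A, hage]; norm_num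
    rw [← hcon, hage] at h3; norm_num at h3
  have hdvd : addOrderOf a₀ ∣ d := by
    rw [addOrderOf_dvd_iff_nsmul_eq_zero]
    funext i
    rw [Pi.smul_apply, Pi.zero_apply, ← Nat.cast_smul_eq_nsmul (ZMod d),
      ZMod.natCast_self, zero_smul]
  haveI hhnz : NeZero (addOrderOf a₀) := ⟨by
    intro h0
    rw [h0] at hdvd
    exact (NeZero.ne d) (Nat.eq_zero_of_zero_dvd hdvd)⟩
  have hone : (1 : ZMod (addOrderOf a₀)) ≠ -1 := by
    intro hcon
    have h2 : ((2:ℕ) : ZMod (addOrderOf a₀)) = 0 := by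
      push_cast
      linear_combination hcon
    have hdvd2 : addOrderOf a₀ ∣ 2 := (ZMod.natCast_eq_zero_iff 2 _).mp h2
    have h2smul : (2:ℕ) • a₀ = 0 := addOrderOf_dvd_iff_nsmul_eq_zero.mp hdvd2
    rw [two_nsmul] at h2smul
    exact hne (eq_neg_of_add_eq_zero_left h2smul)
  obtain ⟨w, hw⟩ : IsUnit ((p:ℕ) : ZMod d) := (ZMod.isUnit_prime_iff_not_dvd hp).mpr hpd
  set f := orderOf ((p:ℕ) : ZMod d) with hfdef
  have hf : 0 < f := by
    rw [hfdef, ← hw, orderOf_units]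
    exact orderOf_pos w
  set φ := ZMod.castHom hdvd (ZMod (addOrderOf a₀)) with hφdef
  set q : ZMod (addOrderOf a₀) := ((p:ℕ) : ZMod (addOrderOf a₀)) with hqdef
  have hφp : φ ((p:ℕ) : ZMod d) = q := by rw [hφdef, map_natCast]
  have hq : q ^ f = 1 := by
    have h1 : ((p:ℕ):ZMod d) ^ f = 1 := pow_orderOf_eq_one _
    rw [← hφp, ← map_pow, h1, map_one]
  -- per-term value of the age
  have hterm : ∀ (a : Fin 4 → ZMod d), a ∈ frakA d → a ∈ H → ∀ s : (ZMod d)ˣ,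
      age (fun i => (s:ZMod d) * a i)
        = 2 + ((if (fun i => (s:ZMod d) * a i) = -a₀ then (1:ℚ) else 0)
             - (if (fun i => (s:ZMod d) * a i) = a₀ then (1:ℚ) else 0)) :=
    fun a haA haH s => age_eq_two_add H ha₀A hage huniq hne
      (frakA_unit_smul haA) (mem_H_smul H _ haH)
  -- splitting the sum, general a
  have hsplit : ∀ (a : Fin 4 → ZMod d), a ∈ frakA d → a ∈ H → ∀ t : (ZMod d)ˣ,
      (∑ j ∈ Finset.range f, age (fun i => (t : ZMod d) * ((p:ℕ) : ZMod d) ^ j * a i))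
        = 2 * f + ∑ j ∈ Finset.range f,
            ((if (fun i => ((t * w ^ j : (ZMod d)ˣ) : ZMod d) * a i) = -a₀ then (1:ℚ) else 0)
           - (if (fun i => ((t * w ^ j : (ZMod d)ˣ) : ZMod d) * a i) = a₀ then (1:ℚ) else 0)) := by
    intro a haA haH t
    have h1 : ∀ j ∈ Finset.range f,
        age (fun i => (t : ZMod d) * ((p:ℕ):ZMod d) ^ j * a i)
          = 2 + ((if (fun i => ((t * w ^ j : (ZMod d)ˣ) : ZMod d) * a i) = -a₀ then (1:ℚ) else 0)
               - (if (fun i => ((t * w ^ j : (ZMod d)ˣ) : ZMod d) * a i) = a₀ then (1:ℚ) else 0)) := by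
      intro j _
      have heq : (fun i => (t : ZMod d) * ((p:ℕ):ZMod d) ^ j * a i)
          = (fun i => ((t * w ^ j : (ZMod d)ˣ) : ZMod d) * a i) := by
        funext i
        rw [Units.val_mul, Units.val_pow_eq_pow_val, hw]
      rw [heq]
      exact hterm a haA haH (t * w ^ j)
    rw [Finset.sum_congr rfl h1, Finset.sum_add_distrib, Finset.sum_const, Finset.card_range]
    push_cast
    ring
  -- the bracket vanishes if a is not a unit multiple of a₀
  have hzero : ∀ (a : Fin 4 → ZMod d),
      (¬ ∃ u : (ZMod d)ˣ, a = fun i => (u:ZMod d) * a₀ i) → ∀ s : (ZMod d)ˣ,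
      ((if (fun i => (s:ZMod d) * a i) = -a₀ then (1:ℚ) else 0)
     - (if (fun i => (s:ZMod d) * a i) = a₀ then (1:ℚ) else 0)) = 0 := by
    intro a hmul s
    have h1 : ¬ ((fun i => (s:ZMod d) * a i) = -a₀) := by
      intro heq
      apply hmul
      refine ⟨-s⁻¹, ?_⟩
      funext i
      have h2 := congrFun heq i
      simp only [Pi.neg_apply] at h2
      have h3 : a i = ((s⁻¹ : (ZMod d)ˣ) : ZMod d) * -(a₀ i) := by
        rw [← h2, Units.inv_mul_cancel_left]
      rw [h3, Units.val_neg]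
      ring
    have h2 : ¬ ((fun i => (s:ZMod d) * a i) = a₀) := by
      intro heq
      apply hmul
      refine ⟨s⁻¹, ?_⟩
      funext i
      have h3 := congrFun heq i
      rw [← h3, Units.inv_mul_cancel_left]
    rw [if_neg h1, if_neg h2, sub_zero]
  -- non-multiples lie in frakBp
  have hBp_notmul : ∀ a, a ∈ frakA d → a ∈ H →
      (¬ ∃ u : (ZMod d)ˣ, a = fun i => (u:ZMod d) * a₀ i) → a ∈ frakBp d p := by
    intro a haA haH hnm
    refine ⟨haA, fun t => ?_⟩
    simp only [← hfdef]
    rw [hsplit a haA haH t, Finset.sum_eq_zero fun j _ => hzero a hnm (t * w ^ j), add_zero]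
  -- splitting the sum for a unit multiple of a₀, in terms of ZMod h
  have hmulsplit : ∀ (u t : (ZMod d)ˣ),
      (∑ j ∈ Finset.range f,
          age (fun i => (t : ZMod d) * ((p:ℕ) : ZMod d) ^ j * ((u:ZMod d) * a₀ i)))
        = 2 * f +
          ((∑ j ∈ Finset.range f,
              if (φ (t:ZMod d) * φ (u:ZMod d)) * q ^ j = -1 then (1:ℚ) else 0)
         - (∑ j ∈ Finset.range f,
              if (φ (t:ZMod d) * φ (u:ZMod d)) * q ^ j = 1 then (1:ℚ) else 0)) := by
    intro u t
    have h1 : ∀ j ∈ Finset.range f,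
        age (fun i => (t : ZMod d) * ((p:ℕ):ZMod d) ^ j * ((u:ZMod d) * a₀ i))
          = 2 + ((if (φ (t:ZMod d) * φ (u:ZMod d)) * q ^ j = -1 then (1:ℚ) else 0)
               - (if (φ (t:ZMod d) * φ (u:ZMod d)) * q ^ j = 1 then (1:ℚ) else 0)) := by
      intro j _
      have heq : (fun i => (t : ZMod d) * ((p:ℕ):ZMod d) ^ j * ((u:ZMod d) * a₀ i))
          = (fun i => ((t * w ^ j * u : (ZMod d)ˣ) : ZMod d) * a₀ i) := by
        funext i
        rw [Units.val_mul, Units.val_mul, Units.val_pow_eq_pow_val, hw]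
        ring
      have hφc : φ ((t * w ^ j * u : (ZMod d)ˣ) : ZMod d)
          = (φ (t:ZMod d) * φ (u:ZMod d)) * q ^ j := by
        rw [Units.val_mul, Units.val_mul, Units.val_pow_eq_pow_val, hw, map_mul, map_mul,
          map_pow, hφp]
        ring
      have e1 : ((fun i => (t : ZMod d) * ((p:ℕ):ZMod d) ^ j * ((u:ZMod d) * a₀ i)) = -a₀)
          ↔ ((φ (t:ZMod d) * φ (u:ZMod d)) * q ^ j = -1) := by
        rw [heq, smul_eq_neg_a₀_iff a₀ hdvd, hφc]
      have e2 : ((fun i => (t : ZMod d) * ((p:ℕ):ZMod d) ^ j * ((u:ZMod d) * a₀ i)) = a₀)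
          ↔ ((φ (t:ZMod d) * φ (u:ZMod d)) * q ^ j = 1) := by
        rw [heq, smul_eq_a₀_iff a₀ hdvd, hφc]
      rw [← if_congr e1 rfl rfl, ← if_congr e2 rfl rfl, heq]
      exact hterm a₀ ha₀A ha₀H (t * w ^ j * u)
    rw [Finset.sum_congr rfl h1, Finset.sum_add_distrib, Finset.sum_const, Finset.card_range,
      Finset.sum_sub_distrib]
    push_cast
    ring
  constructor
  · -- Part 1
    rintro ⟨ℓ, hℓpos, hℓeq⟩
    have hql : q ^ (ℓ % f) = -1 := by
      rw [← pow_eq_pow_mod _ hq]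
      exact hℓeq
    ext a
    simp only [Set.mem_inter_iff, Set.mem_empty_iff_false, iff_false, not_and]
    intro haE haH
    obtain ⟨haA, hnBp⟩ := haE
    apply hnBp
    by_cases hm : ∃ u : (ZMod d)ˣ, a = fun i => (u:ZMod d) * a₀ i
    · obtain ⟨u, rfl⟩ := hm
      refine ⟨frakA_unit_smul ha₀A, fun t => ?_⟩
      simp only [← hfdef]
      rw [hmulsplit u t,
        sum_ite_shift _ q f (ℓ % f) hf hq (Nat.mod_lt _ hf) hql, sub_self, add_zero]
    · exact hBp_notmul a haA haH hm
  · -- Part 2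
    intro hno
    have hnotBp_mul : ∀ u : (ZMod d)ˣ, (fun i => (u:ZMod d) * a₀ i) ∉ frakBp d p := by
      intro u hBp
      have hsum := hBp.2 u⁻¹
      simp only [← hfdef] at hsum
      rw [hmulsplit u u⁻¹] at hsum
      have hcu : φ ((u⁻¹ : (ZMod d)ˣ) : ZMod d) * φ (u:ZMod d) = 1 := by
        rw [← map_mul, Units.inv_mul, map_one]
      rw [hcu] at hsum
      have hS1 : (∑ j ∈ Finset.range f, if (1 : ZMod (addOrderOf a₀)) * q ^ j = -1
          then (1:ℚ) else 0) = 0 := by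
        refine Finset.sum_eq_zero fun j hj => ?_
        rw [one_mul, if_neg]
        rcases Nat.eq_zero_or_pos j with rfl | hjpos
        · rw [pow_zero]
          exact hone
        · exact hno j hjpos
      have hS2 : (1:ℚ) ≤ ∑ j ∈ Finset.range f, if (1 : ZMod (addOrderOf a₀)) * q ^ j = 1
          then (1:ℚ) else 0 := by
        have h0 : (if (1 : ZMod (addOrderOf a₀)) * q ^ 0 = 1 then (1:ℚ) else 0) = 1 := by
          rw [pow_zero, mul_one, if_pos rfl]
        calc (1:ℚ) = if (1 : ZMod (addOrderOf a₀)) * q ^ 0 = 1 then (1:ℚ) else 0 := h0.symm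
        _ ≤ _ := Finset.single_le_sum (f := fun j => if (1 : ZMod (addOrderOf a₀)) * q ^ j = 1
              then (1:ℚ) else 0) (fun i _ => by positivity) (Finset.mem_range.mpr hf)
      rw [hS1] at hsum
      linarith
    ext a
    simp only [frakEp, frakE0, Set.mem_inter_iff, Set.mem_diff]
    constructor
    · rintro ⟨⟨haA, hnBp⟩, haH⟩
      have hm : ∃ u : (ZMod d)ˣ, a = fun i => (u:ZMod d) * a₀ i := by
        by_contra hnm
        exact hnBp (hBp_notmul a haA haH hnm)
      obtain ⟨u, rfl⟩ := hm
      refine ⟨⟨frakA_unit_smul ha₀A, ?_⟩, haH⟩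
      intro hB0
      have h2 := hB0.2 u⁻¹
      have heq : (fun i => ((u⁻¹ : (ZMod d)ˣ) : ZMod d) * ((u:ZMod d) * a₀ i)) = a₀ := by
        funext i
        exact Units.inv_mul_cancel_left u (a₀ i)
      rw [heq] at h2
      rw [hage] at h2
      norm_num at h2
    · rintro ⟨⟨haA, hnB0⟩, haH⟩
      have hex : ∃ t : (ZMod d)ˣ, age (fun i => (t:ZMod d) * a i) ≠ 2 := by
        by_contra hall
        push_neg at hall
        exact hnB0 ⟨haA, hall⟩
      obtain ⟨t, ht⟩ := hex
      have h2 := hterm a haA haH t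
      have hm : ∃ u : (ZMod d)ˣ, a = fun i => (u:ZMod d) * a₀ i := by
        by_cases hcp : (fun i => (t:ZMod d) * a i) = a₀
        · refine ⟨t⁻¹, ?_⟩
          funext i
          rw [← congrFun hcp i, Units.inv_mul_cancel_left]
        · by_cases hcm : (fun i => (t:ZMod d) * a i) = -a₀
          · refine ⟨-t⁻¹, ?_⟩
            funext i
            have h3 := congrFun hcm i
            simp only [Pi.neg_apply] at h3
            have h4 : a i = ((t⁻¹ : (ZMod d)ˣ) : ZMod d) * -(a₀ i) := by
              rw [← h3, Units.inv_mul_cancel_left]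
            rw [h4, Units.val_neg]
            ring
          · exfalso
            rw [if_neg hcm, if_neg hcp] at h2
            norm_num at h2
            exact ht h2
      obtain ⟨u, rfl⟩ := hm
      exact ⟨⟨frakA_unit_smul ha₀A, hnotBp_mul u⟩, haH⟩
end
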